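/- Let p_1, ..., p_r be distinct primes. The Q-linear map Q(√p_1) ⊗_Q Q(√p_2) ⊗_Q ... ⊗_Q Q(√p_r) → Q(√p_1, ..., √p_r) given by x_1 ⊗ ... ⊗ x_r ↦ x_1 · x_2 · ... · x_r is an isomorphism of Q-vector spaces. Equivalently, [Q(√p_1, ..., √p_r) : Q] = 2^r. -/

import Mathlib

open Polynomial IntermediateField

noncomputable section

lemma aux_isIntegral {F : Type*} [Field F] [Algebra F ℝ] (α : ℝ) (c : F)
    (hc : algebraMap F ℝ c = α ^ 2) : IsIntegral F α := by
  refine ⟨X ^ 2 - C c, monic_X_pow_sub_C c two_ne_zero, ?_⟩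
  simp [hc]

lemma aux_mem_adjoin {F : Type*} [Field F] [Algebra F ℝ] (α : ℝ) (c : F)
    (hc : algebraMap F ℝ c = α ^ 2) {x : ℝ}
    (hx : x ∈ IntermediateField.adjoin F {α}) :
    ∃ a b : F, x = algebraMap F ℝ a + algebraMap F ℝ b * α := by
  have hint := aux_isIntegral α c hc
  rw [← IntermediateField.mem_toSubalgebra,
    IntermediateField.adjoin_simple_toSubalgebra_of_isAlgebraic hint.isAlgebraic,
    Algebra.adjoin_singleton_eq_range_aeval] at hx
  obtain ⟨P, rfl⟩ := hx
  have hmon : (X ^ 2 - C c : F[X]).Monic := monic_X_pow_sub_C c two_ne_zero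
  have hPR : (aeval α) P = (aeval α) (P %ₘ (X ^ 2 - C c)) := by
    conv_lhs => rw [← Polynomial.modByMonic_add_div P (X ^ 2 - C c)]
    simp [hc]
  have hdeg : (P %ₘ (X ^ 2 - C c)).natDegree < 2 := by
    have := Polynomial.natDegree_modByMonic_lt P hmon ?_
    · simpa using this
    · intro h
      have := congrArg Polynomial.natDegree h
      simp at this
  refine ⟨(P %ₘ (X ^ 2 - C c)).coeff 0, (P %ₘ (X ^ 2 - C c)).coeff 1, ?_⟩
  simp only [AlgHom.toRingHom_eq_coe, RingHom.coe_coe]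
  rw [hPR, Polynomial.aeval_eq_sum_range' hdeg]
  simp [Finset.sum_range_succ, Algebra.smul_def]

lemma aux_sqrt_not_mem (s : Finset ℕ) (hs : ∀ q ∈ s, Nat.Prime q) :
    ∀ d : ℕ, Squarefree d → 1 < d → (∀ q ∈ s, ¬ q ∣ d) →
      Real.sqrt d ∉ IntermediateField.adjoin ℚ ((fun q : ℕ => Real.sqrt q) '' ↑s) := by
  classical
  induction s using Finset.induction_on with
  | empty =>
    intro d hsf hd1 _ hmem
    simp only [Finset.coe_empty, Set.image_empty, IntermediateField.adjoin_empty] at hmem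
    rw [IntermediateField.mem_bot] at hmem
    have hirr : Irrational (Real.sqrt d) := by
      rw [irrational_sqrt_natCast_iff]
      rintro ⟨y, hy⟩
      have : IsUnit y := hsf y (by rw [hy])
      rw [Nat.isUnit_iff] at this
      rw [this, mul_one] at hy
      omega
    refine hirr ?_
    obtain ⟨y, hy⟩ := hmem
    exact ⟨y, by simpa using hy⟩
  | @insert q t hqt ih =>
    intro d hsf hd1 hcop hmem
    have hq : Nat.Prime q := hs q (Finset.mem_insert_self q t)
    have hst : ∀ p ∈ t, Nat.Prime p := fun p hp => hs p (Finset.mem_insert_of_mem hp)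
    set F := IntermediateField.adjoin ℚ ((fun q : ℕ => Real.sqrt q) '' ↑t) with hF
    have hqF : Real.sqrt q ∉ F := by
      refine ih hst q hq.squarefree hq.one_lt ?_
      intro p hp hdvd
      have := (Nat.prime_dvd_prime_iff_eq (hst p hp) hq).mp hdvd
      exact hqt (this ▸ hp)
    -- transfer membership
    have hmem' : Real.sqrt d ∈ IntermediateField.adjoin F {Real.sqrt q} := by
      rw [← IntermediateField.mem_restrictScalars ℚ, hF]
      erw [IntermediateField.adjoin_adjoin_left]
      have : ((fun q : ℕ => Real.sqrt q) '' ↑t) ∪ {Real.sqrt q}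
          = (fun q : ℕ => Real.sqrt q) '' ↑(insert q t) := by
        rw [Finset.coe_insert, Set.image_insert_eq]
        rw [Set.union_comm, Set.singleton_union]
      rw [this]
      exact hmem
    have hq0 : (0:ℝ) ≤ (q:ℝ) := by positivity
    have hd0 : (0:ℝ) ≤ (d:ℝ) := by positivity
    have hqmem : ((q:ℝ)) ∈ F := by
      have := IntermediateField.algebraMap_mem F ((q : ℚ))
      simpa using this
    have hdmem : ((d:ℝ)) ∈ F := by
      have := IntermediateField.algebraMap_mem F ((d : ℚ))
      simpa using this
    obtain ⟨a, b, hab⟩ := aux_mem_adjoin (F := F) (Real.sqrt q) ⟨(q:ℝ), hqmem⟩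
      (by simpa using (Real.sq_sqrt hq0).symm) hmem'
    set A : ℝ := (a : ℝ) with hA
    set B : ℝ := (b : ℝ) with hB
    have hab' : Real.sqrt d = A + B * Real.sqrt q := hab
    have key : (d:ℝ) = A^2 + B^2*(q:ℝ) + 2*A*B*Real.sqrt q := by
      have h1 : (d:ℝ) = (A + B * Real.sqrt q)^2 := by
        rw [← hab', Real.sq_sqrt hd0]
      have h2 : (A + B * Real.sqrt q)^2
          = A^2 + B^2*((Real.sqrt q)^2) + 2*A*B*Real.sqrt q := by ring
      rw [h1, h2, Real.sq_sqrt hq0]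
    have hAmem : A ∈ F := a.2
    have hBmem : B ∈ F := b.2
    have hAB : A * B = 0 := by
      by_contra hAB
      have h2 : (2:ℝ)*A*B ≠ 0 := by
        intro h; apply hAB; nlinarith [h]
      have : Real.sqrt q = ((d:ℝ) - A^2 - B^2*(q:ℝ)) / (2*A*B) := by
        rw [eq_div_iff h2]
        linear_combination -key
      apply hqF
      rw [this]
      exact div_mem (sub_mem (sub_mem hdmem (pow_mem hAmem 2))
        (mul_mem (pow_mem hBmem 2) hqmem))
        (mul_mem (mul_mem (show (2:ℝ) ∈ F by simpa using IntermediateField.algebraMap_mem F (2:ℚ)) hAmem) hBmem)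
    rcases mul_eq_zero.mp hAB with hA0 | hB0
    · -- A = 0 : sqrt d = B sqrt q, so sqrt (d*q) = B*q ∈ F
      have hsd : Real.sqrt d = B * Real.sqrt q := by rw [hab', hA0, zero_add]
      have hdq : Real.sqrt (d*q) = B * q := by
        push_cast
        rw [Real.sqrt_mul hd0, hsd, mul_assoc, Real.mul_self_sqrt hq0]
      have hqd : ¬ q ∣ d := hcop q (Finset.mem_insert_self q t)
      have hcopdq : Nat.Coprime d q := ((hq.coprime_iff_not_dvd).mpr hqd).symm
      have hsf' : Squarefree (d * q) := (Nat.squarefree_mul hcopdq).mpr ⟨hsf, hq.squarefree⟩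
      have h1' : 1 < d * q := by
        calc 1 < d := hd1
        _ ≤ d * q := Nat.le_mul_of_pos_right d hq.pos
      refine ih hst (d*q) hsf' h1' ?_ ?_
      · intro p hp hdvd
        rcases (hst p hp).dvd_mul.mp hdvd with h | h
        · exact hcop p (Finset.mem_insert_of_mem hp) h
        · have := (Nat.prime_dvd_prime_iff_eq (hst p hp) hq).mp h
          exact hqt (this ▸ hp)
      · rw [show ((d*q : ℕ) : ℝ) = (d:ℝ)*(q:ℝ) by push_cast; ring, hdq]
        exact mul_mem hBmem hqmem
    · -- B = 0 : sqrt d ∈ F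
      have hsd : Real.sqrt d = A := by rw [hab', hB0, zero_mul, add_zero]
      refine ih hst d hsf hd1 (fun p hp => hcop p (Finset.mem_insert_of_mem hp)) ?_
      rw [hsd]; exact hAmem

lemma aux_minpoly_natDegree {F : Type*} [Field F] [Algebra F ℝ] (α : ℝ) (c : F)
    (hc : algebraMap F ℝ c = α ^ 2) (hα : α ∉ (algebraMap F ℝ).range) :
    (minpoly F α).natDegree = 2 := by
  have hint := aux_isIntegral α c hc
  have hne : (X ^ 2 - C c : F[X]) ≠ 0 :=
    (monic_X_pow_sub_C c two_ne_zero).ne_zero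
  have hdvd : minpoly F α ∣ X ^ 2 - C c := minpoly.dvd F α (by simp [hc])
  have hle : (minpoly F α).natDegree ≤ 2 := by
    have := Polynomial.natDegree_le_of_dvd hdvd hne
    simpa using this
  have h1 : (minpoly F α).natDegree ≠ 1 := by
    intro h
    exact hα (minpoly.natDegree_eq_one_iff.mp h)
  have h0 : 0 < (minpoly F α).natDegree := minpoly.natDegree_pos hint
  omega

set_option synthInstance.maxHeartbeats 1000000 in
set_option maxHeartbeats 1000000 in
lemma aux_finrank (s : Finset ℕ) (hs : ∀ q ∈ s, Nat.Prime q) :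
    Module.finrank ℚ
      (IntermediateField.adjoin ℚ ((fun q : ℕ => Real.sqrt q) '' ↑s)) = 2 ^ s.card := by
  classical
  induction s using Finset.induction_on with
  | empty =>
    simp [IntermediateField.adjoin_empty, IntermediateField.finrank_bot]
  | @insert q t hqt ih =>
    have hq : Nat.Prime q := hs q (Finset.mem_insert_self q t)
    have hst : ∀ p ∈ t, Nat.Prime p := fun p hp => hs p (Finset.mem_insert_of_mem hp)
    set F := IntermediateField.adjoin ℚ ((fun q : ℕ => Real.sqrt q) '' ↑t) with hF
    have hqF : Real.sqrt q ∉ F := by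
      refine aux_sqrt_not_mem t hst q hq.squarefree hq.one_lt ?_
      intro p hp hdvd
      have := (Nat.prime_dvd_prime_iff_eq (hst p hp) hq).mp hdvd
      exact hqt (this ▸ hp)
    have hq0 : (0:ℝ) ≤ (q:ℝ) := by positivity
    have hqmem : ((q:ℝ)) ∈ F := by
      simpa using IntermediateField.algebraMap_mem F ((q : ℚ))
    set c : F := ⟨(q:ℝ), hqmem⟩ with hc
    have hcsq : algebraMap F ℝ c = (Real.sqrt q) ^ 2 := by
      simpa [hc] using (Real.sq_sqrt hq0).symm
    have hint : IsIntegral F (Real.sqrt q) := aux_isIntegral _ c hcsq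
    have hnotrange : Real.sqrt q ∉ (algebraMap F ℝ).range := by
      rintro ⟨y, hy⟩
      exact hqF (hy ▸ y.2)
    have hdeg2 : Module.finrank F F⟮Real.sqrt q⟯ = 2 := by
      rw [IntermediateField.adjoin.finrank hint, aux_minpoly_natDegree _ c hcsq hnotrange]
    haveI : FiniteDimensional F F⟮Real.sqrt q⟯ := IntermediateField.adjoin.finiteDimensional hint
    have hres : (F⟮Real.sqrt q⟯).restrictScalars ℚ
        = IntermediateField.adjoin ℚ ((fun q : ℕ => Real.sqrt q) '' ↑(insert q t)) := by
      rw [hF]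
      erw [IntermediateField.adjoin_adjoin_left]
      congr 1
      rw [Finset.coe_insert, Set.image_insert_eq, Set.union_comm, Set.singleton_union]
    have hfr : Module.finrank ℚ ((F⟮Real.sqrt q⟯).restrictScalars ℚ)
        = Module.finrank ℚ F⟮Real.sqrt q⟯ := rfl
    rw [← hres, hfr, ← Module.finrank_mul_finrank ℚ F F⟮Real.sqrt q⟯, hdeg2, ih hst,
      Finset.card_insert_of_notMem hqt]
    ring

open scoped TensorProduct

set_option maxHeartbeats 1000000 in
set_option synthInstance.maxHeartbeats 1000000 in
/-- For distinct primes p_1,...,p_r, the ℚ-linear map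
ℚ(√p_1) ⊗ ⋯ ⊗ ℚ(√p_r) → ℚ(√p_1,...,√p_r), x_1 ⊗ ⋯ ⊗ x_r ↦ x_1⋯x_r, is an
isomorphism of ℚ-vector spaces; equivalently [ℚ(√p_1,...,√p_r) : ℚ] = 2^r. -/
theorem stmt2 (r : ℕ) (p : Fin r → ℕ) (hp : ∀ i, Nat.Prime (p i))
    (hinj : Function.Injective p) :
    (∃ T : (⨂[ℚ] i : Fin r, IntermediateField.adjoin ℚ {Real.sqrt (p i : ℝ)}) ≃ₗ[ℚ]
        IntermediateField.adjoin ℚ (Set.range fun i => Real.sqrt (p i)),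
      ∀ x : Π i, IntermediateField.adjoin ℚ {Real.sqrt (p i : ℝ)},
        (T (PiTensorProduct.tprod ℚ x) : ℝ) = ∏ i, (x i : ℝ)) ∧
    Module.finrank ℚ
      (IntermediateField.adjoin ℚ (Set.range fun i => Real.sqrt (p i))) = 2 ^ r := by
  classical
  set Q : Fin r → IntermediateField ℚ ℝ :=
    fun i => IntermediateField.adjoin ℚ {Real.sqrt (p i : ℝ)} with hQdef
  set K : IntermediateField ℚ ℝ :=
    IntermediateField.adjoin ℚ (Set.range fun i => Real.sqrt (p i)) with hKdef
  -- the degree computation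
  have hsetK : (fun q : ℕ => Real.sqrt q) '' ↑(Finset.image p Finset.univ)
      = Set.range fun i => Real.sqrt (p i) := by
    rw [Finset.coe_image, Finset.coe_univ, Set.image_univ, ← Set.range_comp]
    rfl
  have hfinK : Module.finrank ℚ K = 2 ^ r := by
    rw [hKdef, ← hsetK, aux_finrank _ (by
      intro q hq
      rw [Finset.mem_image] at hq
      obtain ⟨i, _, rfl⟩ := hq
      exact hp i)]
    rw [Finset.card_image_of_injective _ hinj, Finset.card_univ, Fintype.card_fin]
  -- basic members
  have hsq0 : ∀ i, (0:ℝ) ≤ ((p i : ℕ) : ℝ) := fun i => by positivity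
  have hcsq : ∀ i, algebraMap ℚ ℝ ((p i : ℚ)) = (Real.sqrt (p i)) ^ 2 := by
    intro i
    rw [Real.sq_sqrt (hsq0 i)]
    simp
  have hint : ∀ i, IsIntegral ℚ (Real.sqrt (p i)) := fun i => aux_isIntegral _ _ (hcsq i)
  set sq : Π i, Q i := fun i => ⟨Real.sqrt (p i), IntermediateField.mem_adjoin_simple_self ℚ _⟩
    with hsqdef
  have hQK : ∀ i, Q i ≤ K := by
    intro i
    apply IntermediateField.adjoin.mono
    rw [Set.singleton_subset_iff]
    exact ⟨i, rfl⟩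
  -- the multiplication algebra hom
  set f : MultilinearMap ℚ (fun i => Q i) ℝ :=
    (MultilinearMap.mkPiAlgebra ℚ (Fin r) ℝ).compLinearMap
      (fun i => (Q i).val.toLinearMap) with hfdef
  have hfapply : ∀ x : Π i, Q i, f x = ∏ i, (x i : ℝ) := by
    intro x
    simp [hfdef]
  have hone : f 1 = 1 := by rw [hfapply]; simp
  have hmul : ∀ x y, f (x * y) = f x * f y := by
    intro x y
    rw [hfapply, hfapply, hfapply, ← Finset.prod_mul_distrib]
    simp
  set Talg : (⨂[ℚ] i : Fin r, Q i) →ₐ[ℚ] ℝ := PiTensorProduct.liftAlgHom f hone hmul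
    with hTalg
  have htprod : ∀ x : Π i, Q i, Talg (PiTensorProduct.tprod ℚ x) = ∏ i, (x i : ℝ) := by
    intro x
    rw [hTalg]
    rw [show (PiTensorProduct.liftAlgHom f hone hmul) (PiTensorProduct.tprod ℚ x)
      = PiTensorProduct.lift f (PiTensorProduct.tprod ℚ x) from rfl]
    rw [PiTensorProduct.lift.tprod, hfapply]
  have hrangeK : ∀ z : ⨂[ℚ] i : Fin r, Q i, Talg z ∈ K := by
    intro z
    induction z using PiTensorProduct.induction_on with
    | smul_tprod a x =>
      rw [map_smul, Algebra.smul_def]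
      refine mul_mem (IntermediateField.algebraMap_mem K a) ?_
      rw [htprod]
      exact prod_mem (fun i _ => hQK i (x i).2)
    | add u v hu hv =>
      rw [map_add]
      exact add_mem hu hv
  set T : (⨂[ℚ] i : Fin r, Q i) →ₗ[ℚ] K :=
    { toFun := fun z => ⟨Talg z, hrangeK z⟩
      map_add' := fun u v => Subtype.ext (map_add Talg u v)
      map_smul' := fun c u => Subtype.ext (map_smul Talg c u) } with hTdef
  -- surjectivity
  have halg : K.toSubalgebra = Algebra.adjoin ℚ (Set.range fun i => Real.sqrt (p i)) := by
    rw [hKdef]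
    refine IntermediateField.adjoin_toSubalgebra_of_isAlgebraic ?_
    rintro x ⟨i, rfl⟩
    exact (hint i).isAlgebraic
  have hsub : Algebra.adjoin ℚ (Set.range fun i => Real.sqrt (p i)) ≤ Talg.range := by
    rw [Algebra.adjoin_le_iff]
    rintro x ⟨i, rfl⟩
    refine ⟨PiTensorProduct.tprod ℚ (Function.update (fun j => 1) i (sq i)), ?_⟩
    simp only [AlgHom.toRingHom_eq_coe, RingHom.coe_coe]
    rw [htprod, Finset.prod_eq_single i]
    · rw [Function.update_self]
    · intro j _ hj
      rw [Function.update_of_ne hj]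
      simp
    · intro h
      exact absurd (Finset.mem_univ i) h
  have hsurj : Function.Surjective T := by
    intro y
    have hy : (y : ℝ) ∈ Talg.range := hsub (by rw [← halg]; exact y.2)
    obtain ⟨z, hz⟩ := hy
    exact ⟨z, Subtype.ext hz⟩
  -- spanning family of the tensor product
  set e : Π i, Fin 2 → Q i := fun i j => if j = 0 then 1 else sq i with hedef
  have hQspan : ∀ i (v : Q i), ∃ a b : ℚ, v = a • e i 0 + b • e i 1 := by
    intro i v
    obtain ⟨a, b, hab⟩ := aux_mem_adjoin (F := ℚ) (Real.sqrt (p i)) ((p i : ℚ)) (hcsq i) v.2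
    refine ⟨a, b, ?_⟩
    apply Subtype.ext
    rw [hab]
    push_cast
    simp [hedef, hsqdef, Algebra.smul_def]
  set B : (Fin r → Fin 2) → (⨂[ℚ] i : Fin r, Q i) :=
    fun g => PiTensorProduct.tprod ℚ (fun i => e i (g i)) with hBdef
  have hspanA : (⊤ : Submodule ℚ (⨂[ℚ] i : Fin r, Q i)) ≤ Submodule.span ℚ (Set.range B) := by
    intro z _
    induction z using PiTensorProduct.induction_on with
    | smul_tprod a x =>
      refine Submodule.smul_mem _ _ ?_
      choose ca cb hcab using fun i => hQspan i (x i)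
      have hx : x = fun i => ∑ j : Fin 2, (if j = 0 then ca i else cb i) • e i j := by
        funext i
        rw [Fin.sum_univ_two]
        simpa using hcab i
      rw [hx]
      rw [MultilinearMap.map_sum (PiTensorProduct.tprod ℚ)
        (g := fun i j => (if j = 0 then ca i else cb i) • e i j)]
      refine Submodule.sum_mem _ ?_
      intro g _
      rw [MultilinearMap.map_smul_univ]
      exact Submodule.smul_mem _ _ (Submodule.subset_span ⟨g, rfl⟩)
    | add u v hu hv =>
      exact Submodule.add_mem _ (hu trivial) (hv trivial)
  have hspanA' : Submodule.span ℚ (Set.range B) = ⊤ := le_antisymm le_top hspanA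
  haveI hAfin : Module.Finite ℚ (⨂[ℚ] i : Fin r, Q i) := by
    rw [Module.finite_def]
    refine ⟨Finset.image B Finset.univ, ?_⟩
    rw [Finset.coe_image, Finset.coe_univ, Set.image_univ]
    exact hspanA'
  have hfinA_le : Module.finrank ℚ (⨂[ℚ] i : Fin r, Q i) ≤ 2 ^ r := by
    have h1 : Module.finrank ℚ (⨂[ℚ] i : Fin r, Q i)
        = Module.finrank ℚ (Submodule.span ℚ (Set.range B)) := by
      rw [hspanA']
      exact (finrank_top ℚ _).symm
    rw [h1]
    refine le_trans (finrank_span_le_card (Set.range B)) ?_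
    rw [Set.toFinset_range]
    refine le_trans (Finset.card_image_le) ?_
    rw [Finset.card_univ, Fintype.card_fun, Fintype.card_fin, Fintype.card_fin]
  -- finiteness of K
  haveI hKfin : FiniteDimensional ℚ K := by
    rw [hKdef]
    haveI : Finite (Set.range fun i => Real.sqrt (p i)) := Set.finite_range _
    exact IntermediateField.finiteDimensional_adjoin (fun x hx => by
      obtain ⟨i, rfl⟩ := hx
      exact hint i)
  -- conclude
  have hrank2 : Module.finrank ℚ K ≤ Module.finrank ℚ (⨂[ℚ] i : Fin r, Q i) := by
    have : LinearMap.range T = ⊤ := LinearMap.range_eq_top.mpr hsurj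
    calc Module.finrank ℚ K = Module.finrank ℚ (⊤ : Submodule ℚ K) := (finrank_top ℚ _).symm
    _ = Module.finrank ℚ (LinearMap.range T) := by rw [this]
    _ ≤ Module.finrank ℚ (⨂[ℚ] i : Fin r, Q i) := LinearMap.finrank_range_le T
  have hfinA : Module.finrank ℚ (⨂[ℚ] i : Fin r, Q i) = 2 ^ r :=
    le_antisymm hfinA_le (hfinK ▸ hrank2)
  have hinjT : Function.Injective T :=
    (LinearMap.injective_iff_surjective_of_finrank_eq_finrank
      (by rw [hfinA, hfinK])).mpr hsurj
  refine ⟨⟨LinearEquiv.ofBijective T ⟨hinjT, hsurj⟩, ?_⟩, hfinK⟩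
  intro x
  have : ((LinearEquiv.ofBijective T ⟨hinjT, hsurj⟩) (PiTensorProduct.tprod ℚ x) : ℝ)
      = Talg (PiTensorProduct.tprod ℚ x) := rfl
  rw [this, htprod]

end
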